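/- Let Q be an integral sharp additive commutative monoid. Then for every integer c > 0 and every i ≥ 0: (1) Q_c^{(i)} is a submonoid of G ⊗_ℤ ℚ and is sharp (γ + δ = 0 with γ, δ ∈ Q_c^{(i)} implies γ = 0); (2) the map Q_c^{(i+1)} → Q_c^{(i)} sending γ to c • γ is a well-defined bijective monoid homomorphism. -/
import Mathlib


universe u v

open scoped TensorProduct

namespace Stmt2

variable {Q : Type u} [AddCommMonoid Q] {G : Type v} [AddCommGroup G]

/-- The submonoid-like subset `Q_ℚ` of `G ⊗_ℤ ℚ` (realized as `ℚ ⊗[ℤ] G`), consisting of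
the nonnegative rational multiples of elements of the image of `Q`. -/
noncomputable def QQset (ι : Q →+ G) : Set (ℚ ⊗[ℤ] G) :=
  {x | ∃ (q : Q) (r : ℚ), 0 ≤ r ∧ x = r • ((1 : ℚ) ⊗ₜ[ℤ] ι q)}

/-- The subset `Q_c^{(i)} = {γ ∈ Q_ℚ | c^i • γ ∈ Q}` of `G ⊗_ℤ ℚ`. -/
noncomputable def Qci (ι : Q →+ G) (c i : ℕ) : Set (ℚ ⊗[ℤ] G) :=
  {γ | γ ∈ QQset ι ∧ (c ^ i) • γ ∈ Set.range (fun q : Q => (1 : ℚ) ⊗ₜ[ℤ] ι q)}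

/-- The localized-module lemma: `1 ⊗ g = 0` in `ℚ ⊗[ℤ] G` iff `g` is torsion. -/
lemma tmul_eq_zero_iff_torsion {G : Type v} [AddCommGroup G] (g : G) :
    (1 : ℚ) ⊗ₜ[ℤ] g = 0 ↔ ∃ s : nonZeroDivisors ℤ, s • g = 0 := by
  have h : IsLocalizedModule (nonZeroDivisors ℤ) (TensorProduct.mk ℤ ℚ G 1) := by
    rw [isLocalizedModule_iff_isBaseChange (nonZeroDivisors ℤ) ℚ]
    exact TensorProduct.isBaseChange ℤ G ℚ
  exact IsLocalizedModule.eq_zero_iff (nonZeroDivisors ℤ) (TensorProduct.mk ℤ ℚ G 1)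

/-- For an integral sharp commutative monoid `Q` with groupification
`ι : Q → G`, and integers `c > 0`, `i ≥ 0`: (1) `Q_c^{(i)}` is a submonoid of `G ⊗_ℤ ℚ`
and is sharp; (2) the `c`-times map is a well-defined bijection
`Q_c^{(i+1)} → Q_c^{(i)}`. -/
theorem stmt2 (Q : Type u) [AddCommMonoid Q] [IsCancelAdd Q]
    (hsharp : ∀ x y : Q, x + y = 0 → x = 0)
    (G : Type v) [AddCommGroup G] (ι : Q →+ G) (hι : Function.Injective ι)
    (hgen : AddSubgroup.closure (Set.range ι) = ⊤)
    (c i : ℕ) (hc : 0 < c) :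
    ((0 : ℚ ⊗[ℤ] G) ∈ Qci ι c i ∧
      (∀ x ∈ Qci ι c i, ∀ y ∈ Qci ι c i, x + y ∈ Qci ι c i) ∧
      (∀ x ∈ Qci ι c i, ∀ y ∈ Qci ι c i, x + y = 0 → x = 0)) ∧
    ((∀ γ ∈ Qci ι c (i + 1), c • γ ∈ Qci ι c i) ∧
      Set.BijOn (fun γ => c • γ) (Qci ι c (i + 1)) (Qci ι c i)) := by
  have hcQ : ((c : ℚ)) ≠ 0 := by positivity
  have hciQ : ((c ^ i : ℕ) : ℚ) ≠ 0 := by positivity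
  -- a preliminary: nat smul equals rat-cast smul
  have hns : ∀ (n : ℕ) (x : ℚ ⊗[ℤ] G), n • x = ((n : ℚ)) • x := fun n x =>
    (Nat.cast_smul_eq_nsmul ℚ n x).symm
  -- injectivity into the rationalization on elements of Q
  have hinj : ∀ a : Q, (1 : ℚ) ⊗ₜ[ℤ] ι a = 0 → a = 0 := by
    intro a ha
    obtain ⟨s, hs⟩ := (tmul_eq_zero_iff_torsion (ι a)).mp ha
    rw [Submonoid.smul_def] at hs
    have hsne : (s : ℤ) ≠ 0 := nonZeroDivisors.coe_ne_zero s
    have hnpos : 0 < (s : ℤ).natAbs := Int.natAbs_pos.mpr hsne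
    have hzn : (((s : ℤ).natAbs : ℤ)) • ι a = 0 := by
      rcases Int.natAbs_eq (s : ℤ) with h | h
      · rw [← h]; exact hs
      · have h2 : (((s : ℤ).natAbs : ℤ)) = -(s : ℤ) := by omega
        rw [h2, neg_smul, hs, neg_zero]
    have hna : (s : ℤ).natAbs • ι a = 0 := by rw [← natCast_zsmul]; exact hzn
    have hna' : ι ((s : ℤ).natAbs • a) = ι 0 := by rw [map_nsmul, hna, map_zero]
    have hnaQ : (s : ℤ).natAbs • a = 0 := hι hna'
    obtain ⟨m, hm⟩ := Nat.exists_eq_succ_of_ne_zero hnpos.ne'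
    rw [hm, succ_nsmul] at hnaQ
    have : a + m • a = 0 := by rw [add_comm]; exact hnaQ
    exact hsharp a (m • a) this
  constructor
  · refine ⟨⟨⟨0, 0, le_refl 0, by simp⟩, ⟨0, by simp⟩⟩, ?_, ?_⟩
    · rintro x ⟨-, a, ha⟩ y ⟨-, b, hb⟩
      replace ha : (1 : ℚ) ⊗ₜ[ℤ] ι a = (c ^ i) • x := ha
      replace hb : (1 : ℚ) ⊗ₜ[ℤ] ι b = (c ^ i) • y := hb
      have hsum : (1 : ℚ) ⊗ₜ[ℤ] ι (a + b) = (c ^ i) • (x + y) := by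
        rw [smul_add, ← ha, ← hb, map_add, TensorProduct.tmul_add]
      constructor
      · refine ⟨a + b, ((c ^ i : ℕ) : ℚ)⁻¹, by positivity, ?_⟩
        rw [hsum, hns, ← smul_assoc, smul_eq_mul, inv_mul_cancel₀ hciQ, one_smul]
      · exact ⟨a + b, hsum⟩
    · rintro x ⟨-, a, ha⟩ y ⟨-, b, hb⟩ hxy
      replace ha : (1 : ℚ) ⊗ₜ[ℤ] ι a = (c ^ i) • x := ha
      replace hb : (1 : ℚ) ⊗ₜ[ℤ] ι b = (c ^ i) • y := hb
      have hab : (1 : ℚ) ⊗ₜ[ℤ] ι (a + b) = 0 := by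
        rw [map_add, TensorProduct.tmul_add, ha, hb, ← smul_add, hxy, smul_zero]
      have ha0 : a = 0 := hsharp a b (hinj _ hab)
      have hx0 : ((c ^ i : ℕ) : ℚ) • x = 0 := by
        rw [← hns, ← ha, ha0, map_zero, TensorProduct.tmul_zero]
      calc x = ((c ^ i : ℕ) : ℚ)⁻¹ • (((c ^ i : ℕ) : ℚ) • x) :=
              (inv_smul_smul₀ hciQ x).symm
        _ = 0 := by rw [hx0, smul_zero]
  · have hmaps : ∀ γ ∈ Qci ι c (i + 1), c • γ ∈ Qci ι c i := by
      rintro γ ⟨⟨q, r, hr, hγ⟩, a, ha⟩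
      replace ha : (1 : ℚ) ⊗ₜ[ℤ] ι a = (c ^ (i + 1)) • γ := ha
      constructor
      · refine ⟨q, (c : ℚ) * r, by positivity, ?_⟩
        rw [hγ, hns, ← smul_assoc, smul_eq_mul]
      · refine ⟨a, ?_⟩
        show (1 : ℚ) ⊗ₜ[ℤ] ι a = (c ^ i) • (c • γ)
        rw [smul_smul, ← pow_succ]; exact ha
    refine ⟨hmaps, hmaps, ?_, ?_⟩
    · intro x _ y _ hxy
      simp only [hns] at hxy
      exact smul_right_injective _ hcQ hxy
    · rintro δ ⟨⟨q, r, hr, hδ⟩, a, ha⟩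
      replace ha : (1 : ℚ) ⊗ₜ[ℤ] ι a = (c ^ i) • δ := ha
      have key : (c ^ (i + 1)) • (((c : ℚ))⁻¹ • δ) = (c ^ i) • δ := by
        rw [hns, hns, ← smul_assoc, smul_eq_mul]
        congr 1
        push_cast
        rw [pow_succ]
        field_simp
      refine ⟨((c : ℚ))⁻¹ • δ, ⟨⟨q, (c : ℚ)⁻¹ * r, by positivity, ?_⟩, ⟨a, ?_⟩⟩, ?_⟩
      · rw [hδ, ← smul_assoc, smul_eq_mul]
      · show (1 : ℚ) ⊗ₜ[ℤ] ι a = (c ^ (i + 1)) • (((c : ℚ))⁻¹ • δ)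
        rw [key]; exact ha
      · show c • (((c : ℚ))⁻¹ • δ) = δ
        rw [hns, smul_inv_smul₀ hcQ]

end Stmt2
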